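/- Let p be a prime, q a prime power coprime to p such that the class of q is a primitive element of F_p, and let R = F_q[Y]/(Y^p − 1). Let C ⊆ R^ℓ (ℓ ≥ 1) be a Hermitian self-dual linear code over R. Then there exists a codeword of C whose first coordinate is a unit of R. -/

import Mathlib

open Polynomial

noncomputable section

/-- The ring `R = F_q[Y]/(Y^m − 1)`. -/
abbrev Rq (F : Type) [Field F] (m : ℕ) := AdjoinRoot ((X : F[X]) ^ m - 1)

lemma root_pow_eq_one (F : Type) [Field F] (m : ℕ) :
    (AdjoinRoot.root ((X : F[X]) ^ m - 1)) ^ m = 1 := by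
  have h : (aeval (AdjoinRoot.root ((X : F[X]) ^ m - 1)) ((X : F[X]) ^ m - 1)) = 0 := by
    rw [AdjoinRoot.aeval_eq, AdjoinRoot.mk_self]
  simp only [map_sub, map_pow, aeval_X, map_one, sub_eq_zero] at h
  exact h

/-- Conjugation on `R`: the `F`-algebra map determined by `Y ↦ Y^{m−1} (= Y⁻¹)`. -/
noncomputable def conjR (F : Type) [Field F] (m : ℕ) : Rq F m →ₐ[F] Rq F m :=
  AdjoinRoot.liftAlgHom _ (Algebra.ofId F _) ((AdjoinRoot.root ((X : F[X]) ^ m - 1)) ^ (m - 1)) (by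
    change aeval _ _ = 0
    simp only [map_sub, map_pow, aeval_X, map_one, sub_eq_zero, ← pow_mul]
    rw [mul_comm, pow_mul, root_pow_eq_one, one_pow])

/-- The Hermitian inner product `⟨x,y⟩ = Σ_j x_j ⬝ conj(y_j)` on `R^n`. -/
def herm (F : Type) [Field F] (m : ℕ) {n : ℕ} (x y : Fin n → Rq F m) : Rq F m :=
  ∑ j, x j * conjR F m (y j)

/-- A linear code `C ⊆ R^n` is Hermitian self-dual if `C = C^⊥`, i.e. membership in `C`
coincides with orthogonality to all of `C`. -/
def IsHermSelfDual (F : Type) [Field F] (m : ℕ) {n : ℕ}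
    (C : Submodule (Rq F m) (Fin n → Rq F m)) : Prop :=
  ∀ y, y ∈ C ↔ ∀ x ∈ C, herm F m x y = 0

/- ---------- auxiliary lemmas ---------- -/

lemma root_pow_mod (F : Type) [Field F] (m : ℕ) (a : ℕ) :
    (AdjoinRoot.root ((X : F[X]) ^ m - 1)) ^ a
      = (AdjoinRoot.root ((X : F[X]) ^ m - 1)) ^ (a % m) := by
  conv_lhs => rw [← Nat.div_add_mod a m]
  rw [pow_add, pow_mul, root_pow_eq_one, one_pow, one_mul]

lemma conjR_root (F : Type) [Field F] (m : ℕ) :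
    conjR F m (AdjoinRoot.root ((X : F[X]) ^ m - 1))
      = (AdjoinRoot.root ((X : F[X]) ^ m - 1)) ^ (m - 1) := by
  simp [conjR, AdjoinRoot.liftAlgHom_root]

lemma conjR_conjR (F : Type) [Field F] (m : ℕ) (hm : 2 ≤ m) (a : Rq F m) :
    conjR F m (conjR F m a) = a := by
  have h : (conjR F m).comp (conjR F m) = AlgHom.id F (Rq F m) := by
    apply AdjoinRoot.algHom_ext
    rw [AlgHom.comp_apply, conjR_root, map_pow, conjR_root, ← pow_mul, AlgHom.id_apply]
    rw [root_pow_mod]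
    have h2 : (m - 1) * (m - 1) % m = 1 % m := by
      obtain ⟨t, rfl⟩ : ∃ t, m = t + 2 := ⟨m - 2, by omega⟩
      have h3 : t + 2 - 1 = t + 1 := by omega
      have : (t + 1) * (t + 1) = 1 + (t + 2) * t := by ring
      rw [h3, this, Nat.add_mul_mod_self_left]
    rw [h2, ← root_pow_mod, pow_one]
  calc conjR F m (conjR F m a) = ((conjR F m).comp (conjR F m)) a := rfl
    _ = a := by rw [h]; rfl

lemma pF_ne_zero (F : Type) [Field F] [Fintype F] (p : ℕ)
    (hp : p.Prime) (hcop : Nat.Coprime p (Fintype.card F)) : (p : F) ≠ 0 := by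
  intro h
  haveI : CharP F (ringChar F) := ringChar.charP F
  have hdvd : ringChar F ∣ p := (CharP.cast_eq_zero_iff F (ringChar F) p).mp h
  have hcprime : (ringChar F).Prime := CharP.char_is_prime F (ringChar F)
  have heq : ringChar F = p := (Nat.prime_dvd_prime_iff_eq hcprime hp).mp hdvd
  have hdc : ringChar F ∣ Fintype.card F := by
    rw [← CharP.cast_eq_zero_iff F (ringChar F) (Fintype.card F)]
    exact FiniteField.cast_card_eq_zero F
  rw [heq] at hdc
  exact hp.one_lt.ne' (Nat.Coprime.eq_one_of_dvd hcop hdc)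

lemma sf_poly (F : Type) [Field F] [Fintype F] (p : ℕ)
    (hp : p.Prime) (hcop : Nat.Coprime p (Fintype.card F)) :
    Squarefree ((X : F[X]) ^ p - 1) := by
  have h := separable_X_pow_sub_C (1 : F) (pF_ne_zero F p hp hcop) one_ne_zero
  rw [map_one] at h
  exact h.squarefree

lemma poly_ne_zero (F : Type) [Field F] (p : ℕ) (hp : p.Prime) :
    ((X : F[X]) ^ p - 1) ≠ 0 := by
  have := X_pow_sub_C_ne_zero (R := F) hp.pos 1
  rwa [map_one] at this

lemma reduced_Rq (F : Type) [Field F] [Fintype F] (p : ℕ)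
    (hp : p.Prime) (hcop : Nat.Coprime p (Fintype.card F)) :
    IsReduced (Rq F p) := by
  constructor
  intro a ⟨n, hn⟩
  obtain ⟨b, rfl⟩ := AdjoinRoot.mk_surjective a
  rw [← map_pow, AdjoinRoot.mk_eq_zero] at hn
  rw [AdjoinRoot.mk_eq_zero]
  exact (sf_poly F p hp hcop).isRadical n b hn

lemma exists_k (F : Type) [Field F] [Fintype F] (p : ℕ)
    (hp : p.Prime) (hcop : Nat.Coprime p (Fintype.card F))
    (hprim : ∀ u : (ZMod p)ˣ,
      u ∈ Subgroup.zpowers (ZMod.unitOfCoprime (Fintype.card F) hcop.symm)) :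
    ∃ k : ℕ, (Fintype.card F) ^ k % p = p - 1 := by
  haveI : Fact p.Prime := ⟨hp⟩
  obtain ⟨k, hk⟩ := mem_powers_iff_mem_zpowers.mpr (hprim (-1))
  refine ⟨k, ?_⟩
  have h1 : ((Fintype.card F ^ k : ℕ) : ZMod p) = ((p - 1 : ℕ) : ZMod p) := by
    have := congrArg (Units.val) hk
    rw [Units.val_pow_eq_pow_val, ZMod.coe_unitOfCoprime] at this
    push_cast at this ⊢
    rw [this, Nat.cast_sub hp.one_le, ZMod.natCast_self]
    ring
  have h2 := (ZMod.natCast_eq_natCast_iff _ _ _).mp h1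
  rwa [Nat.ModEq, Nat.mod_eq_of_lt (Nat.sub_lt hp.pos one_pos)] at h2

lemma conjR_eq_pow (F : Type) [Field F] [Fintype F] (p : ℕ)
    (hp : p.Prime)
    (k : ℕ) (hk : (Fintype.card F) ^ k % p = p - 1) (a : Rq F p) :
    conjR F p a = a ^ (Fintype.card F ^ k) := by
  haveI : Nontrivial (Rq F p) := by
    apply AdjoinRoot.nontrivial
    have h : ((X : F[X]) ^ p - 1) = X ^ p - C 1 := by rw [map_one]
    rw [h, degree_X_pow_sub_C hp.pos]
    exact_mod_cast hp.ne_zero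
  haveI : CharP (Rq F p) (ringChar F) :=
    charP_of_injective_algebraMap (algebraMap F (Rq F p)).injective (ringChar F)
  have hcp : (ringChar F).Prime := CharP.char_is_prime F _
  haveI : Fact (ringChar F).Prime := ⟨hcp⟩
  obtain ⟨n, hnp, hcard⟩ := FiniteField.card F (ringChar F)
  have hpow : ringChar F ^ ((n : ℕ) * k) = Fintype.card F ^ k := by
    rw [pow_mul, ← hcard]
  let φ : Rq F p →ₐ[F] Rq F p :=
    { iterateFrobenius (Rq F p) (ringChar F) ((n : ℕ) * k) with
      commutes' := fun x => by
        simp only [RingHom.toMonoidHom_eq_coe, OneHom.toFun_eq_coe, MonoidHom.toOneHom_coe,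
          MonoidHom.coe_coe, iterateFrobenius_def]
        rw [hpow, ← map_pow, FiniteField.pow_card_pow] }
  have hφ : ∀ b : Rq F p, φ b = b ^ (Fintype.card F ^ k) := fun b => by
    show iterateFrobenius (Rq F p) (ringChar F) ((n : ℕ) * k) b = _
    rw [iterateFrobenius_def, hpow]
  have hconj : conjR F p = φ := by
    apply AdjoinRoot.algHom_ext
    rw [conjR_root, hφ]
    conv_rhs => rw [root_pow_mod, hk]
  rw [hconj, hφ]

/-- Every Hermitian self-dual code over `R = F_q[Y]/(Y^p − 1)` of length `ℓ ≥ 1` has a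
codeword whose first coordinate is a unit of `R`. -/
theorem statement8 (F : Type) [Field F] [Fintype F]
    (p : ℕ) (hp : p.Prime) (hcop : Nat.Coprime p (Fintype.card F))
    (hprim : ∀ u : (ZMod p)ˣ,
      u ∈ Subgroup.zpowers (ZMod.unitOfCoprime (Fintype.card F) hcop.symm))
    (ℓ : ℕ) (hℓ : 0 < ℓ)
    (C : Submodule (Rq F p) (Fin ℓ → Rq F p)) (hC : IsHermSelfDual F p C) :
    ∃ v ∈ C, IsUnit (v ⟨0, hℓ⟩) := by
  classical
  set f : F[X] := (X : F[X]) ^ p - 1 with hf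
  set i0 : Fin ℓ := ⟨0, hℓ⟩ with hi0
  set I : Submodule (Rq F p) (Rq F p) := Submodule.map (LinearMap.proj i0) C with hI
  by_cases h1 : (1 : Rq F p) ∈ I
  · obtain ⟨v, hv, hv1⟩ := h1
    refine ⟨v, hv, ?_⟩
    have : v i0 = 1 := hv1
    rw [this]
    exact isUnit_one
  · exfalso
    haveI := reduced_Rq F p hp hcop
    obtain ⟨k, hk⟩ := exists_k F p hp hcop hprim
    set J : Ideal F[X] := Ideal.comap (AdjoinRoot.mk f) I with hJ
    have hfJ : f ∈ J := by
      rw [hJ, Ideal.mem_comap, AdjoinRoot.mk_self]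
      exact I.zero_mem
    set g : F[X] := Submodule.IsPrincipal.generator J with hg
    obtain ⟨h, hfh⟩ := (Submodule.IsPrincipal.mem_iff_generator_dvd J).mp hfJ
    set e : Rq F p := AdjoinRoot.mk f h with he
    have fne : f ≠ 0 := poly_ne_zero F p hp
    have he0 : e ≠ 0 := by
      intro hcon
      rw [he, AdjoinRoot.mk_eq_zero] at hcon
      obtain ⟨c, hc⟩ := hcon
      have hone : (1 : F[X]) = g * c := by
        have : f * 1 = f * (g * c) := by
          rw [mul_one]
          calc f = g * h := hfh
            _ = g * (f * c) := by rw [← hc]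
            _ = f * (g * c) := by ring
        exact mul_left_cancel₀ fne this
      have hgu : IsUnit g := IsUnit.of_mul_eq_one (a := g) c hone.symm
      have hJtop : (1 : F[X]) ∈ J :=
        J.eq_top_iff_one.mp (J.eq_top_of_isUnit_mem (Submodule.IsPrincipal.generator_mem J) hgu)
      rw [hJ, Ideal.mem_comap, map_one] at hJtop
      exact h1 hJtop
    have hann : ∀ x ∈ C, e * x i0 = 0 := by
      intro x hx
      have hxI : x i0 ∈ I := Submodule.mem_map.mpr ⟨x, hx, rfl⟩
      obtain ⟨b, hb⟩ := AdjoinRoot.mk_surjective (x i0)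
      have hbJ : b ∈ J := by rw [hJ, Ideal.mem_comap, hb]; exact hxI
      obtain ⟨c, hc⟩ := (Submodule.IsPrincipal.mem_iff_generator_dvd J).mp hbJ
      rw [← hb, hc, he, ← map_mul]
      have : h * (g * c) = f * c := by rw [hfh]; ring
      rw [this, map_mul, AdjoinRoot.mk_self, zero_mul]
    set w : Fin ℓ → Rq F p := Pi.single i0 (conjR F p e) with hw
    have hwC : w ∈ C := by
      rw [hC]
      intro x hx
      show (∑ j, x j * conjR F p (w j)) = 0
      rw [Finset.sum_eq_single i0]
      · rw [hw, Pi.single_eq_same, conjR_conjR F p hp.two_le, mul_comm]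
        exact hann x hx
      · intro j _ hj
        rw [hw, Pi.single_eq_of_ne hj, map_zero, mul_zero]
      · intro hmem
        exact absurd (Finset.mem_univ i0) hmem
    have hkey : e * conjR F p e = 0 := by
      have := hann w hwC
      rwa [hw, Pi.single_eq_same] at this
    rw [conjR_eq_pow F p hp k hk] at hkey
    have hnil : e ^ (Fintype.card F ^ k + 1) = 0 := by
      rw [pow_succ, mul_comm]
      exact hkey
    exact he0 (IsNilpotent.eq_zero ⟨_, hnil⟩)
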